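/- Let G be a graph with minimum degree δ(G) ≥ 1. Then γ_SMB(G) = 2 if and only if G has at least two strong support vertices. -/

import Mathlib

/-!
Formalization of the Maker-Breaker domination game (MBD game).

In the MBD game on a graph `G`, Dominator and Staller alternately select
previously unplayed vertices.  Dominator wins when the set of vertices he has
selected is a dominating set of `G`; Staller wins when she has selected a
vertex of every dominating set of `G`, which happens exactly when the closed
neighbourhood of some vertex is entirely contained in her set of selected
vertices.
-/

/-- `D` is a dominating set of `G` (as a finset of vertices). -/
def IsDomSet {V : Type*} (G : SimpleGraph V) (D : Finset V) : Prop :=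
  ∀ v, v ∈ D ∨ ∃ u ∈ D, G.Adj u v

/-- Staller (whose selected vertices form `S`) has won: she owns the whole
closed neighbourhood of some vertex, hence a vertex of every dominating set. -/
def StallerWon {V : Type*} (G : SimpleGraph V) (S : Finset V) : Prop :=
  ∃ v, v ∈ S ∧ ∀ u, G.Adj v u → u ∈ S

section Game

variable {V : Type*} [DecidableEq V]

mutual
  /-- Position with Dominator's vertices `D`, Staller's vertices `S` and
  Dominator to move: Dominator can guarantee to complete a dominating set
  using at most `k` further moves of his own. -/
  inductive DomWinD (G : SimpleGraph V) : Finset V → Finset V → ℕ → Prop where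
    | done (D S : Finset V) (k : ℕ) : IsDomSet G D → DomWinD G D S k
    | step (D S : Finset V) (k : ℕ) (v : V) : v ∉ D → v ∉ S →
        DomWinS G (insert v D) S k → DomWinD G D S (k + 1)

  /-- Position with Dominator's vertices `D`, Staller's vertices `S` and
  Staller to move: Dominator can guarantee to complete a dominating set
  using at most `k` further moves of his own. -/
  inductive DomWinS (G : SimpleGraph V) : Finset V → Finset V → ℕ → Prop where
    | done (D S : Finset V) (k : ℕ) : IsDomSet G D → DomWinS G D S k
    | step (D S : Finset V) (k : ℕ) : (∃ w, w ∉ D ∧ w ∉ S) →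
        (∀ w, w ∉ D → w ∉ S → DomWinD G D (insert w S) k) → DomWinS G D S k
end

mutual
  /-- Position with Dominator's vertices `D`, Staller's vertices `S` and
  Staller to move: Staller can guarantee to claim a whole closed neighbourhood
  using at most `k` further moves of her own. -/
  inductive StalWinS (G : SimpleGraph V) : Finset V → Finset V → ℕ → Prop where
    | done (D S : Finset V) (k : ℕ) : StallerWon G S → StalWinS G D S k
    | step (D S : Finset V) (k : ℕ) (w : V) : w ∉ D → w ∉ S →
        StalWinD G D (insert w S) k → StalWinS G D S (k + 1)

  /-- Position with Dominator's vertices `D`, Staller's vertices `S` and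
  Dominator to move: Staller can guarantee to claim a whole closed
  neighbourhood using at most `k` further moves of her own. -/
  inductive StalWinD (G : SimpleGraph V) : Finset V → Finset V → ℕ → Prop where
    | done (D S : Finset V) (k : ℕ) : StallerWon G S → StalWinD G D S k
    | step (D S : Finset V) (k : ℕ) : (∃ v, v ∉ D ∧ v ∉ S) →
        (∀ v, v ∉ D → v ∉ S → StalWinS G (insert v D) S k) → StalWinD G D S k
end

/-- `γ_MB(G)`: minimum number of Dominator's moves with which he can guarantee
to win the D-game (Dominator moves first); `⊤` if he cannot win it. -/
noncomputable def gammaMB (G : SimpleGraph V) : ℕ∞ :=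
  sInf {k : ℕ∞ | ∃ n : ℕ, k = n ∧ DomWinD G ∅ ∅ n}

/-- `γ_MB'(G)`: minimum number of Dominator's moves with which he can guarantee
to win the S-game (Staller moves first); `⊤` if he cannot win it. -/
noncomputable def gammaMB' (G : SimpleGraph V) : ℕ∞ :=
  sInf {k : ℕ∞ | ∃ n : ℕ, k = n ∧ DomWinS G ∅ ∅ n}

/-- `γ_SMB(G)`: minimum number of Staller's moves with which she can guarantee
to win the D-game (Dominator moves first); `⊤` if she cannot win it. -/
noncomputable def gammaSMB (G : SimpleGraph V) : ℕ∞ :=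
  sInf {k : ℕ∞ | ∃ n : ℕ, k = n ∧ StalWinD G ∅ ∅ n}

/-- `γ_SMB'(G)`: minimum number of Staller's moves with which she can guarantee
to win the S-game (Staller moves first); `⊤` if she cannot win it. -/
noncomputable def gammaSMB' (G : SimpleGraph V) : ℕ∞ :=
  sInf {k : ℕ∞ | ∃ n : ℕ, k = n ∧ StalWinS G ∅ ∅ n}

/-- Outcome `𝒟`: Dominator has a winning strategy no matter who starts. -/
def OutcomeD (G : SimpleGraph V) : Prop :=
  (∃ n, DomWinD G ∅ ∅ n) ∧ (∃ n, DomWinS G ∅ ∅ n)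

/-- Outcome `𝒮`: Staller has a winning strategy no matter who starts. -/
def OutcomeS (G : SimpleGraph V) : Prop :=
  (∃ n, StalWinD G ∅ ∅ n) ∧ (∃ n, StalWinS G ∅ ∅ n)

/-- Outcome `𝒩`: the first player has a winning strategy. -/
def OutcomeN (G : SimpleGraph V) : Prop :=
  (∃ n, DomWinD G ∅ ∅ n) ∧ (∃ n, StalWinS G ∅ ∅ n)

end Game

/-- The corona product `G ⊙ H`: one copy of `G`, a copy of `H` for every
vertex of `G`, and the `i`-th vertex of `G` joined to every vertex of the
`i`-th copy of `H`. -/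
def coronaProd {α β : Type*} (G : SimpleGraph α) (H : SimpleGraph β) :
    SimpleGraph (α ⊕ α × β) where
  Adj x y :=
    match x, y with
    | Sum.inl a, Sum.inl a' => G.Adj a a'
    | Sum.inl a, Sum.inr p => a = p.1
    | Sum.inr p, Sum.inl a => a = p.1
    | Sum.inr p, Sum.inr q => p.1 = q.1 ∧ H.Adj p.2 q.2
  symm := by
    constructor
    rintro (a | p) (a' | q) h
    · exact G.adj_symm h
    · exact h
    · exact h
    · exact ⟨h.1.symm, H.adj_symm h.2⟩
  loopless := by
    constructor
    rintro (a | p) h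
    · exact G.ne_of_adj h rfl
    · exact H.ne_of_adj h.2 rfl

/-- The domination number `γ(G)` of a finite graph. -/
noncomputable def domNumber {V : Type*} [Fintype V] (G : SimpleGraph V) : ℕ :=
  sInf {n : ℕ | ∃ D : Finset V, D.card = n ∧ IsDomSet G D}

/-- `v` is a dominating vertex: it is adjacent to all other vertices. -/
def IsDomVertex {V : Type*} (G : SimpleGraph V) (v : V) : Prop :=
  ∀ u, u ≠ v → G.Adj v u

/-- `v` is an isolated vertex (degree `0`). -/
def IsIsolatedVertex {V : Type*} (G : SimpleGraph V) (v : V) : Prop :=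
  ∀ u, ¬ G.Adj v u

/-- `v` is a leaf (degree `1`). -/
def IsLeaf {V : Type*} (G : SimpleGraph V) (v : V) : Prop :=
  ∃! u, G.Adj v u

/-- `v` is a strong support vertex: adjacent to at least two leaves. -/
def IsStrongSupport {V : Type*} (G : SimpleGraph V) (v : V) : Prop :=
  ∃ u w, u ≠ w ∧ G.Adj v u ∧ G.Adj v w ∧ IsLeaf G u ∧ IsLeaf G w

section Aux

variable {V : Type*} [DecidableEq V]

lemma leaf_nbr {G : SimpleGraph V} {l s : V} (L : IsLeaf G l) (a : G.Adj s l) :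
    ∀ u, G.Adj l u → u = s := by
  obtain ⟨c, _, hu⟩ := L
  intro u h
  rw [hu u h, hu s a.symm]

lemma ss_not_leaf {G : SimpleGraph V} {v : V} (h : IsStrongSupport G v) :
    ¬ IsLeaf G v := by
  obtain ⟨u1, u2, h12, a1, a2, _, _⟩ := h
  rintro ⟨c, _, hu⟩
  exact h12 ((hu u1 a1).trans (hu u2 a2).symm)

lemma stalWinS_zero {G : SimpleGraph V} {D S : Finset V} (h : StalWinS G D S 0) :
    StallerWon G S := by
  cases h with
  | done _ _ _ hw => exact hw

lemma stalWinD_zero {G : SimpleGraph V} {D S : Finset V} (h : StalWinD G D S 0) :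
    StallerWon G S := by
  cases h with
  | done _ _ _ hw => exact hw
  | step _ _ _ hex hall =>
    obtain ⟨v, h1, h2⟩ := hex
    exact stalWinS_zero (hall v h1 h2)

lemma not_stallerWon_subsingle {G : SimpleGraph V} (hdelta : ∀ v, ∃ u, G.Adj v u)
    {S : Finset V} (hS : ∀ x ∈ S, ∀ y ∈ S, x = y) : ¬ StallerWon G S := by
  rintro ⟨x, hx, hN⟩
  obtain ⟨u, hu⟩ := hdelta x
  exact hu.ne (hS x hx u (hN u hu))

lemma staller_leaf_finish {G : SimpleGraph V} {D : Finset V} {s l : V}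
    (hlD : l ∉ D) (hls : l ≠ s) (a : G.Adj s l) (L : IsLeaf G l) :
    StalWinS G D (insert s ∅) 1 := by
  refine StalWinS.step _ _ 0 l hlD (by simp [hls]) ?_
  refine StalWinD.done _ _ _ ⟨l, by simp, fun u hu => ?_⟩
  simp [leaf_nbr L a u hu]

lemma staller_pair_win {G : SimpleGraph V} {d s l1 l2 : V}
    (hs : s ≠ d) (h1 : l1 ≠ d) (h2 : l2 ≠ d) (h12 : l1 ≠ l2)
    (a1 : G.Adj s l1) (a2 : G.Adj s l2) (L1 : IsLeaf G l1) (L2 : IsLeaf G l2) :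
    StalWinS G (insert d ∅) (∅ : Finset V) 2 := by
  refine StalWinS.step _ _ 1 s (by simp [hs]) (Finset.notMem_empty s) ?_
  refine StalWinD.step _ _ 1 ⟨l1, by simp [h1], by simp [a1.ne']⟩ ?_
  intro d2 _ _
  by_cases hd2 : d2 = l1
  · exact staller_leaf_finish (by simp [hd2, h2, Ne.symm h12]) a2.ne' a2 L2
  · exact staller_leaf_finish (by simp [h1, Ne.symm hd2]) a1.ne' a1 L1

lemma two_ss_stalWinD_two {G : SimpleGraph V} {v w : V} (hvw : v ≠ w)
    (hv : IsStrongSupport G v) (hw : IsStrongSupport G w) :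
    StalWinD G ∅ ∅ 2 := by
  obtain ⟨u1, u2, h12, a1, a2, L1, L2⟩ := hv
  obtain ⟨x1, x2, e12, b1, b2, M1, M2⟩ := hw
  have hvnl : ¬ IsLeaf G v := ss_not_leaf ⟨u1, u2, h12, a1, a2, L1, L2⟩
  have hwnl : ¬ IsLeaf G w := ss_not_leaf ⟨x1, x2, e12, b1, b2, M1, M2⟩
  refine StalWinD.step _ _ _ ⟨v, Finset.notMem_empty v, Finset.notMem_empty v⟩ ?_
  intro d _ _
  by_cases hd : d = v ∨ d = u1 ∨ d = u2
  · refine staller_pair_win ?_ ?_ ?_ e12 b1 b2 M1 M2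
    · rcases hd with rfl | rfl | rfl
      · exact hvw.symm
      · exact fun h => hwnl (h ▸ L1)
      · exact fun h => hwnl (h ▸ L2)
    · rcases hd with rfl | rfl | rfl
      · exact fun h => hvnl (h ▸ M1)
      · intro h
        exact hvw (leaf_nbr L1 a1 w (by rw [← h]; exact b1.symm)).symm
      · intro h
        exact hvw (leaf_nbr L2 a2 w (by rw [← h]; exact b1.symm)).symm
    · rcases hd with rfl | rfl | rfl
      · exact fun h => hvnl (h ▸ M2)
      · intro h
        exact hvw (leaf_nbr L1 a1 w (by rw [← h]; exact b2.symm)).symm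
      · intro h
        exact hvw (leaf_nbr L2 a2 w (by rw [← h]; exact b2.symm)).symm
  · push_neg at hd
    exact staller_pair_win (Ne.symm hd.1) (Ne.symm hd.2.1) (Ne.symm hd.2.2) h12 a1 a2 L1 L2

lemma not_stalWinD_one {G : SimpleGraph V} (hdelta : ∀ v, ∃ u, G.Adj v u) :
    ¬ StalWinD G ∅ ∅ 1 := by
  intro h
  have hempty : ¬ StallerWon G (∅ : Finset V) :=
    not_stallerWon_subsingle hdelta (by simp)
  cases h with
  | done _ _ _ hw => exact hempty hw
  | step _ _ _ hex hall =>
    obtain ⟨v0, h1, h2⟩ := hex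
    have h3 := hall v0 h1 h2
    cases h3 with
    | done _ _ _ hw => exact hempty hw
    | step _ _ _ w hwD hwS h4 =>
      exact not_stallerWon_subsingle hdelta (by simp) (stalWinD_zero h4)

lemma not_stalWinD_two {G : SimpleGraph V} (hdelta : ∀ v, ∃ u, G.Adj v u)
    (hss : ∀ a b, IsStrongSupport G a → IsStrongSupport G b → a = b) :
    ¬ StalWinD G ∅ ∅ 2 := by
  intro h
  have hempty : ¬ StallerWon G (∅ : Finset V) :=
    not_stallerWon_subsingle hdelta (by simp)
  cases h with
  | done _ _ _ hw => exact hempty hw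
  | step _ _ _ hex hall =>
    obtain ⟨v0, _, _⟩ := hex
    obtain ⟨d1, hd1⟩ : ∃ d1, ∀ s, IsStrongSupport G s → s = d1 := by
      by_cases hS : ∃ s, IsStrongSupport G s
      · obtain ⟨s, hs⟩ := hS
        exact ⟨s, fun t ht => hss t s ht hs⟩
      · exact ⟨v0, fun s hs => absurd ⟨s, hs⟩ hS⟩
    have h2 := hall d1 (Finset.notMem_empty _) (Finset.notMem_empty _)
    cases h2 with
    | done _ _ _ hw => exact hempty hw
    | step _ _ _ s1 hs1D hs1S h3 =>
      have hs1 : ¬ IsStrongSupport G s1 := fun hx => hs1D (by simp [hd1 s1 hx])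
      have hsingle : ¬ StallerWon G (insert s1 ∅) :=
        not_stallerWon_subsingle hdelta (by simp)
      cases h3 with
      | done _ _ _ hw => exact hsingle hw
      | step _ _ _ hex2 hall2 =>
        have key : ∀ x, x ≠ s1 → StallerWon G (insert x (insert s1 ∅)) →
            G.Adj s1 x ∧ ((∀ u, G.Adj x u → u = s1) ∨ (∀ u, G.Adj s1 u → u = x)) := by
          rintro x hx ⟨a, ha, hN⟩
          simp only [Finset.mem_insert, Finset.notMem_empty, or_false] at ha
          rcases ha with rfl | rfl
          · have hx1 : ∀ u, G.Adj a u → u = s1 := by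
              intro u hu
              have hm := hN u hu
              simp only [Finset.mem_insert, Finset.notMem_empty, or_false] at hm
              rcases hm with rfl | rfl
              · exact absurd rfl hu.ne
              · rfl
            obtain ⟨u, hu⟩ := hdelta a
            have heq := hx1 u hu
            subst heq
            exact ⟨hu.symm, Or.inl hx1⟩
          · have hx2 : ∀ u, G.Adj a u → u = x := by
              intro u hu
              have hm := hN u hu
              simp only [Finset.mem_insert, Finset.notMem_empty, or_false] at hm
              rcases hm with rfl | rfl
              · rfl
              · exact absurd rfl hu.ne
            obtain ⟨u, hu⟩ := hdelta a
            have heq := hx2 u hu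
            exact ⟨heq ▸ hu, Or.inr hx2⟩
        have uniq : ∀ x y, x ≠ s1 → y ≠ s1 →
            StallerWon G (insert x (insert s1 ∅)) →
            StallerWon G (insert y (insert s1 ∅)) → x = y := by
          intro x y hx hy hwx hwy
          obtain ⟨ax, hxc⟩ := key x hx hwx
          obtain ⟨ay, hyc⟩ := key y hy hwy
          rcases hxc with hx1 | hx2
          · rcases hyc with hy1 | hy2
            · by_contra hxy
              exact hs1 ⟨x, y, hxy, ax, ay, ⟨s1, ax.symm, hx1⟩, ⟨s1, ay.symm, hy1⟩⟩
            · exact hy2 x ax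
          · exact (hx2 y ay).symm
        by_cases hc : ∃ c, c ≠ s1 ∧ c ≠ d1 ∧ StallerWon G (insert c (insert s1 ∅))
        · obtain ⟨c, hcs, hcd, hcw⟩ := hc
          have h4 := hall2 c (by simp [hcd]) (by simp [hcs])
          cases h4 with
          | done _ _ _ hw => exact hsingle hw
          | step _ _ _ s2 hs2D hs2S h5 =>
            have hw2 := stalWinD_zero h5
            have hs2s1 : s2 ≠ s1 := by simpa using hs2S
            have : s2 = c := uniq s2 c hs2s1 hcs hw2 hcw
            simp [this] at hs2D
        · obtain ⟨v1, hv1D, hv1S⟩ := hex2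
          have h4 := hall2 v1 hv1D hv1S
          cases h4 with
          | done _ _ _ hw => exact hsingle hw
          | step _ _ _ s2 hs2D hs2S h5 =>
            have hw2 := stalWinD_zero h5
            simp only [Finset.mem_insert, Finset.notMem_empty, or_false,
              not_or] at hs2D hs2S
            exact hc ⟨s2, hs2S, hs2D.2, hw2⟩

end Aux

/-- Let `G` be a graph with `δ(G) ≥ 1`.  Then `γ_SMB(G) = 2` if and only if
`G` has at least two strong support vertices. -/
theorem gammaSMB_eq_two_iff {V : Type*} [Fintype V] [DecidableEq V]
    (G : SimpleGraph V) (hdelta : ∀ v, ∃ u, G.Adj v u) :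
    gammaSMB G = 2 ↔
      ∃ v w, v ≠ w ∧ IsStrongSupport G v ∧ IsStrongSupport G w := by
  have hempty : ¬ StallerWon G (∅ : Finset V) :=
    not_stallerWon_subsingle hdelta (by simp)
  constructor
  · intro h
    have hne : {k : ℕ∞ | ∃ n : ℕ, k = n ∧ StalWinD G ∅ ∅ n}.Nonempty := by
      by_contra hcon
      rw [Set.not_nonempty_iff_eq_empty] at hcon
      rw [gammaSMB, hcon, sInf_empty] at h
      simp at h
    obtain ⟨k, n, rfl, hn⟩ := hne
    have hNne : {m : ℕ | StalWinD G ∅ ∅ m}.Nonempty := ⟨n, hn⟩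
    have hmem : StalWinD G ∅ ∅ (sInf {m : ℕ | StalWinD G ∅ ∅ m}) := Nat.sInf_mem hNne
    have heq : gammaSMB G = ((sInf {m : ℕ | StalWinD G ∅ ∅ m} : ℕ) : ℕ∞) := by
      apply le_antisymm
      · exact sInf_le ⟨_, rfl, hmem⟩
      · apply le_sInf
        rintro k ⟨n', rfl, hn'⟩
        exact_mod_cast Nat.sInf_le hn'
    rw [heq] at h
    have hm2 : sInf {m : ℕ | StalWinD G ∅ ∅ m} = 2 := by exact_mod_cast h
    rw [hm2] at hmem
    by_contra hcon
    push_neg at hcon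
    refine not_stalWinD_two hdelta (fun a b ha hb => ?_) hmem
    by_contra hab
    exact hcon a b hab ha hb
  · rintro ⟨v, w, hvw, hv, hw⟩
    have hwin := two_ss_stalWinD_two hvw hv hw
    apply le_antisymm
    · exact sInf_le ⟨2, by norm_num, hwin⟩
    · apply le_sInf
      rintro k ⟨n, rfl, hn⟩
      match n with
      | 0 => exact absurd (stalWinD_zero hn) hempty
      | 1 => exact absurd hn (not_stalWinD_one hdelta)
      | (n + 2) => exact_mod_cast Nat.le_add_left 2 n
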